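/- If a string s' is obtained from s by inserting or deleting a single character c at an arbitrary position, then the Move-To-Front encodings MTF(s') and MTF(s) differ in at most |Σ| positions (aligning the common symbols); specifically, only the first occurrence of each alphabet symbol between the edited position and the next occurrence of c can change its MTF code. -/

import Mathlib

/-- Move-To-Front encoding of a string, starting from the list (ordering of the
alphabet) `L`: each symbol is encoded by its current position in the list and then
moved to the front. -/
def mtfEncode {α : Type*} [DecidableEq α] (L : List α) : List α → List ℕ
  | [] => []
  | a :: s => L.idxOf a :: mtfEncode (a :: L.erase a) s

namespace MTFAux

variable {α : Type*} [DecidableEq α]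

/-- The state of the MTF list after encoding `s`. -/
def mtfState (L : List α) : List α → List α
  | [] => L
  | a :: s => mtfState (a :: L.erase a) s

theorem mtfEncode_append (L : List α) (u v : List α) :
    mtfEncode L (u ++ v) = mtfEncode L u ++ mtfEncode (mtfState L u) v := by
  induction u generalizing L with
  | nil => rfl
  | cons a u ih => simp [mtfEncode, mtfState, ih]

theorem length_mtfEncode (L : List α) (s : List α) :
    (mtfEncode L s).length = s.length := by
  induction s generalizing L with
  | nil => rfl
  | cons a s ih => simp [mtfEncode, ih]

theorem mtfState_perm (L : List α) (s : List α) (h : ∀ x : α, x ∈ L) :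
    List.Perm (mtfState L s) L := by
  induction s generalizing L with
  | nil => exact List.Perm.refl _
  | cons a s ih =>
      have h1 : List.Perm (a :: L.erase a) L := (List.perm_cons_erase (h a)).symm
      have h2 : ∀ x : α, x ∈ a :: L.erase a := fun x => h1.mem_iff.mpr (h x)
      exact (ih _ h2).trans h1

theorem insertIdx_eq_take_drop (c : α) :
    ∀ (p : ℕ) (s : List α), p ≤ s.length →
      s.insertIdx p c = s.take p ++ c :: s.drop p
  | 0, s, _ => by simp [List.insertIdx_zero]
  | (p+1), [], h => by simp at h
  | (p+1), a :: s, h => by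
      have := insertIdx_eq_take_drop c p s (by simpa using h)
      simp [List.insertIdx_succ_cons, this]

theorem eraseIdx_append_cons : ∀ (X : List ℕ) (y : ℕ) (Z : List ℕ),
    (X ++ y :: Z).eraseIdx X.length = X ++ Z
  | [], y, Z => by simp
  | x :: X, y, Z => by simp [List.eraseIdx, eraseIdx_append_cons X y Z]

/-- Index of `x` in `L` versus in `L.erase a`. -/
theorem idx_erase (a x : α) (hx : x ≠ a) : ∀ (L : List α),
    L.idxOf x = (L.erase a).idxOf x + (if L.idxOf a < L.idxOf x then 1 else 0)
  | [] => by simp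
  | y :: L => by
      rcases eq_or_ne y a with rfl | hya
      · rw [List.erase_cons_head, List.idxOf_cons_self,
          List.idxOf_cons_ne _ hx.symm]
        simp [Nat.succ_eq_add_one]
      · rw [List.erase_cons_tail (a := a) (b := y) (by simpa using hya)]
        rcases eq_or_ne x y with rfl | hxy
        · simp [List.idxOf_cons_self]
        · rw [List.idxOf_cons_ne _ hxy.symm,
            List.idxOf_cons_ne _ hxy.symm,
            List.idxOf_cons_ne _ hya]
          have := idx_erase a x hx L
          simp only [Nat.succ_eq_add_one]
          split_ifs at this ⊢ <;> omega

theorem idx_ne {L : List α} (hL : L.Nodup) {x y : α} (hx : x ∈ L) (hy : y ∈ L)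
    (hxy : x ≠ y) : L.idxOf x ≠ L.idxOf y :=
  fun h => hxy ((List.idxOf_inj hx).1 h)

section Core

variable {L1 L2 : List α} (c : α)

/-- Preservation of the "same list after erasing c" invariant. -/
theorem erase_step (a : α) (he : L1.erase c = L2.erase c) :
    (a :: L1.erase a).erase c = (a :: L2.erase a).erase c := by
  rcases eq_or_ne a c with rfl | h
  · rw [List.erase_cons_head, List.erase_cons_head, he]
  · rw [List.erase_cons_tail (by simpa using h),
      List.erase_cons_tail (by simpa using h),
      List.erase_comm, he, List.erase_comm]

/-- Preservation of the "c is not later in L2 than in L1" invariant. -/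
theorem idxc_step (a : α) (h1 : L1.Nodup) (h2 : L2.Nodup)
    (hm1 : ∀ x : α, x ∈ L1) (hm2 : ∀ x : α, x ∈ L2)
    (he : L1.erase c = L2.erase c) (hle : L2.idxOf c ≤ L1.idxOf c) :
    (a :: L2.erase a).idxOf c ≤ (a :: L1.erase a).idxOf c := by
  rcases eq_or_ne a c with rfl | hac
  · simp
  have hca : c ≠ a := fun h => hac h.symm
  rw [List.idxOf_cons_ne _ hac, List.idxOf_cons_ne _ hac]
  have e1 := idx_erase a c hca L1
  have e2 := idx_erase a c hca L2
  have f1 := idx_erase c a hac L1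
  have f2 := idx_erase c a hac L2
  rw [he] at f1
  have n1 : L1.idxOf a ≠ L1.idxOf c := idx_ne h1 (hm1 a) (hm1 c) hac
  have n2 : L2.idxOf a ≠ L2.idxOf c := idx_ne h2 (hm2 a) (hm2 c) hac
  simp only [Nat.succ_eq_add_one]
  split_ifs at e1 e2 f1 f2 <;> omega

/-- If the codes of `b` agree before a move-to-front of `a`, `b ≠ a`,
they agree afterwards. -/
theorem idx_step (a b : α) (hba : b ≠ a) (h1 : L1.Nodup) (h2 : L2.Nodup)
    (hm1 : ∀ x : α, x ∈ L1) (hm2 : ∀ x : α, x ∈ L2)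
    (he : L1.erase c = L2.erase c)
    (hb : L1.idxOf b = L2.idxOf b) :
    (a :: L1.erase a).idxOf b = (a :: L2.erase a).idxOf b := by
  rcases eq_or_ne a c with rfl | hac
  · rw [he]
  rw [List.idxOf_cons_ne _ hba.symm, List.idxOf_cons_ne _ hba.symm]
  have e1 := idx_erase a b hba L1
  have e2 := idx_erase a b hba L2
  have f1 := idx_erase c a hac L1
  have f2 := idx_erase c a hac L2
  rw [he] at f1
  have n1 : L1.idxOf a ≠ L1.idxOf c := idx_ne h1 (hm1 a) (hm1 c) hac
  have n2 : L2.idxOf a ≠ L2.idxOf c := idx_ne h2 (hm2 a) (hm2 c) hac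
  have n3 : L1.idxOf a ≠ L1.idxOf b := idx_ne h1 (hm1 a) (hm1 b) (fun h => hba h.symm)
  have n4 : L2.idxOf a ≠ L2.idxOf b := idx_ne h2 (hm2 a) (hm2 b) (fun h => hba h.symm)
  rcases eq_or_ne b c with rfl | hbc
  · simp only [Nat.succ_eq_add_one]
    split_ifs at e1 e2 f1 f2 <;> omega
  · have g1 := idx_erase c b hbc L1
    have g2 := idx_erase c b hbc L2
    rw [he] at g1
    have m1 : L1.idxOf b ≠ L1.idxOf c := idx_ne h1 (hm1 b) (hm1 c) hbc
    have m2 : L2.idxOf b ≠ L2.idxOf c := idx_ne h2 (hm2 b) (hm2 c) hbc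
    simp only [Nat.succ_eq_add_one]
    split_ifs at e1 e2 f1 f2 g1 g2 <;> omega

end Core

theorem card_filter_cons_le (P Q : ℕ → Prop) [DecidablePred P] [DecidablePred Q] (n : ℕ)
    (h : ∀ i, P (i + 1) ↔ Q i) :
    ((Finset.range (n + 1)).filter P).card
      ≤ (if P 0 then 1 else 0) + ((Finset.range n).filter Q).card := by
  have himg : ∀ i ∈ (Finset.range (n + 1)).filter P, i ≠ 0 →
      i ∈ ((Finset.range n).filter Q).image (· + 1) := by
    intro i hi hi0
    simp only [Finset.mem_filter, Finset.mem_range] at hi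
    obtain ⟨j, rfl⟩ : ∃ j, i = j + 1 := ⟨i - 1, by omega⟩
    simp only [Finset.mem_image, Finset.mem_filter, Finset.mem_range]
    exact ⟨j, ⟨by omega, (h j).1 hi.2⟩, rfl⟩
  by_cases hP : P 0
  · have hsub : (Finset.range (n + 1)).filter P ⊆
        insert 0 (((Finset.range n).filter Q).image (· + 1)) := by
      intro i hi
      rcases eq_or_ne i 0 with rfl | hi0
      · exact Finset.mem_insert_self _ _
      · exact Finset.mem_insert_of_mem (himg i hi hi0)
    calc ((Finset.range (n + 1)).filter P).card
        ≤ (insert 0 (((Finset.range n).filter Q).image (· + 1))).card :=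
          Finset.card_le_card hsub
      _ ≤ (((Finset.range n).filter Q).image (· + 1)).card + 1 :=
          Finset.card_insert_le _ _
      _ ≤ ((Finset.range n).filter Q).card + 1 := by
          exact Nat.add_le_add_right (Finset.card_image_le) 1
      _ = (if P 0 then 1 else 0) + ((Finset.range n).filter Q).card := by
          rw [if_pos hP]; omega
  · have hsub : (Finset.range (n + 1)).filter P ⊆
        ((Finset.range n).filter Q).image (· + 1) := by
      intro i hi
      refine himg i hi ?_
      rintro rfl
      simp only [Finset.mem_filter] at hi
      exact hP hi.2
    calc ((Finset.range (n + 1)).filter P).card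
        ≤ (((Finset.range n).filter Q).image (· + 1)).card := Finset.card_le_card hsub
      _ ≤ ((Finset.range n).filter Q).card := Finset.card_image_le
      _ ≤ _ := by omega

theorem filter_shift (P Q : ℕ → Prop) [DecidablePred P] [DecidablePred Q] (p m : ℕ)
    (h1 : ∀ i < p, ¬ P i) (h2 : ∀ j, P (p + j) ↔ Q j) :
    ((Finset.range (p + m)).filter P).card ≤ ((Finset.range m).filter Q).card := by
  have hsub : (Finset.range (p + m)).filter P ⊆
      ((Finset.range m).filter Q).image (p + ·) := by
    intro i hi
    simp only [Finset.mem_filter, Finset.mem_range] at hi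
    have hip : p ≤ i := by
      by_contra hc
      exact h1 i (by omega) hi.2
    obtain ⟨j, rfl⟩ : ∃ j, i = p + j := ⟨i - p, by omega⟩
    simp only [Finset.mem_image, Finset.mem_filter, Finset.mem_range]
    exact ⟨j, ⟨by omega, (h2 j).1 hi.2⟩, rfl⟩
  calc ((Finset.range (p + m)).filter P).card
      ≤ (((Finset.range m).filter Q).image (p + ·)).card := Finset.card_le_card hsub
    _ ≤ _ := Finset.card_image_le

variable [Fintype α]

/-- Core counting lemma: if the two MTF lists agree after erasing `c`, with `c` not
later in `L2` than in `L1`, then the number of positions where the two encodings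
of `t` differ is at most the number of symbols currently coded differently. -/
theorem mtf_core (c : α) : ∀ (t L1 L2 : List α), L1.Nodup → L2.Nodup →
    (∀ x : α, x ∈ L1) → (∀ x : α, x ∈ L2) →
    L1.erase c = L2.erase c → L2.idxOf c ≤ L1.idxOf c →
    ((Finset.range t.length).filter fun i =>
        (mtfEncode L1 t)[i]? ≠ (mtfEncode L2 t)[i]?).card
      ≤ (Finset.univ.filter fun b : α => L1.idxOf b ≠ L2.idxOf b).card
  | [], L1, L2, _, _, _, _, _, _ => by simp
  | a :: t, L1, L2, h1, h2, hm1, hm2, he, hle => by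
      set M1 : List α := a :: L1.erase a with hM1
      set M2 : List α := a :: L2.erase a with hM2
      have hM1n : M1.Nodup := List.nodup_cons.mpr ⟨h1.not_mem_erase, h1.erase a⟩
      have hM2n : M2.Nodup := List.nodup_cons.mpr ⟨h2.not_mem_erase, h2.erase a⟩
      have hM1m : ∀ x : α, x ∈ M1 := by
        intro x
        rcases eq_or_ne x a with rfl | hxa
        · exact List.mem_cons_self
        · exact List.mem_cons_of_mem _ ((List.mem_erase_of_ne hxa).mpr (hm1 x))
      have hM2m : ∀ x : α, x ∈ M2 := by
        intro x
        rcases eq_or_ne x a with rfl | hxa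
        · exact List.mem_cons_self
        · exact List.mem_cons_of_mem _ ((List.mem_erase_of_ne hxa).mpr (hm2 x))
      have hMe : M1.erase c = M2.erase c := erase_step c a he
      have hMle : M2.idxOf c ≤ M1.idxOf c := idxc_step c a h1 h2 hm1 hm2 he hle
      have ihc := mtf_core c t M1 M2 hM1n hM2n hM1m hM2m hMe hMle
      -- the set of possibly-different symbols shrinks
      have hsub : (Finset.univ.filter fun b : α => M1.idxOf b ≠ M2.idxOf b) ⊆
          (Finset.univ.filter fun b : α => L1.idxOf b ≠ L2.idxOf b).erase a := by
        intro b hb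
        simp only [Finset.mem_filter, Finset.mem_univ, true_and] at hb
        have hba : b ≠ a := by
          rintro rfl
          exact hb (by rw [hM1, hM2, List.idxOf_cons_self, List.idxOf_cons_self])
        refine Finset.mem_erase.mpr ⟨hba, ?_⟩
        simp only [Finset.mem_filter, Finset.mem_univ, true_and]
        intro hEq
        exact hb (idx_step c a b hba h1 h2 hm1 hm2 he hEq)
      -- relate the filters for `a :: t` and `t`
      have hstep := card_filter_cons_le
        (fun i => (mtfEncode L1 (a :: t))[i]? ≠ (mtfEncode L2 (a :: t))[i]?)
        (fun i => (mtfEncode M1 t)[i]? ≠ (mtfEncode M2 t)[i]?)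
        t.length
        (fun i => by simp [mtfEncode, hM1, hM2])
      simp only [List.length_cons] at *
      by_cases ha : L1.idxOf a = L2.idxOf a
      · have hP0 : ¬ ((mtfEncode L1 (a :: t))[0]? ≠ (mtfEncode L2 (a :: t))[0]?) := by
          simp [mtfEncode, ha]
        rw [if_neg hP0] at hstep
        have := Finset.card_le_card hsub
        have herase := Finset.card_erase_le (s := Finset.univ.filter
          fun b : α => L1.idxOf b ≠ L2.idxOf b) (a := a)
        omega
      · have haD : a ∈ Finset.univ.filter fun b : α => L1.idxOf b ≠ L2.idxOf b := by
          simp [ha]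
        have hcard := Finset.card_erase_of_mem haD
        have hpos : 0 < (Finset.univ.filter
            fun b : α => L1.idxOf b ≠ L2.idxOf b).card := Finset.card_pos.mpr ⟨a, haD⟩
        have := Finset.card_le_card hsub
        split_ifs at hstep <;> omega

end MTFAux

/-- If `s'` is obtained from `s` by inserting a single character
`c` at an arbitrary position `p` (equivalently, `s` is obtained from `s'` by
deleting that character), then — aligning the common symbols, i.e. removing the
code of the inserted character from `MTF(s')` — the encodings `MTF(s)` and
`MTF(s')` differ in at most `σ = |Σ|` positions. -/
theorem mtf_insert_stable (α : Type*) [Fintype α] [DecidableEq α]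
    (L : List α) (hnodup : L.Nodup) (hfull : ∀ a : α, a ∈ L)
    (s : List α) (p : ℕ) (hp : p ≤ s.length) (c : α) :
    ((Finset.range s.length).filter fun i =>
        (mtfEncode L s)[i]? ≠ ((mtfEncode L (s.insertIdx p c)).eraseIdx p)[i]?).card
      ≤ Fintype.card α := by
  classical
  set A := s.take p with hA
  set t := s.drop p with ht
  set S := MTFAux.mtfState L A with hS
  have hSperm : List.Perm S L := MTFAux.mtfState_perm L A hfull
  have hSn : S.Nodup := hSperm.symm.nodup hnodup
  have hSm : ∀ x : α, x ∈ S := fun x => hSperm.mem_iff.mpr (hfull x)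
  have hAlen : A.length = p := by
    rw [hA, List.length_take]; omega
  have hs : s = A ++ t := (List.take_append_drop p s).symm
  have hs' : s.insertIdx p c = A ++ c :: t := MTFAux.insertIdx_eq_take_drop c p s hp
  have hEA : (mtfEncode L A).length = p := by
    rw [MTFAux.length_mtfEncode, hAlen]
  have henc1 : mtfEncode L s = mtfEncode L A ++ mtfEncode S t := by
    conv_lhs => rw [hs]
    exact MTFAux.mtfEncode_append L A t
  have henc2 : (mtfEncode L (s.insertIdx p c)).eraseIdx p
      = mtfEncode L A ++ mtfEncode (c :: S.erase c) t := by
    rw [hs', MTFAux.mtfEncode_append]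
    show (mtfEncode L A ++ mtfEncode S (c :: t)).eraseIdx p = _
    rw [show mtfEncode S (c :: t) = S.idxOf c :: mtfEncode (c :: S.erase c) t from rfl,
      ← hEA, MTFAux.eraseIdx_append_cons]
  have hlen : s.length = p + t.length := by
    rw [ht, List.length_drop]; omega
  rw [hlen, henc1, henc2]
  have hcore := MTFAux.mtf_core c t S (c :: S.erase c) hSn
    (List.nodup_cons.mpr ⟨hSn.not_mem_erase, hSn.erase c⟩)
    hSm
    (fun x => by
      rcases eq_or_ne x c with rfl | hxc
      · exact List.mem_cons_self
      · exact List.mem_cons_of_mem _ ((List.mem_erase_of_ne hxc).mpr (hSm x)))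
    (by rw [List.erase_cons_head])
    (by rw [List.idxOf_cons_self]; omega)
  have hshift := MTFAux.filter_shift
    (fun i => (mtfEncode L A ++ mtfEncode S t)[i]?
      ≠ (mtfEncode L A ++ mtfEncode (c :: S.erase c) t)[i]?)
    (fun j => (mtfEncode S t)[j]? ≠ (mtfEncode (c :: S.erase c) t)[j]?)
    p t.length
    (fun i hi => by
      simp only [ne_eq, not_not]
      rw [List.getElem?_append_left (by omega), List.getElem?_append_left (by omega)])
    (fun j => by
      simp only [ne_eq]
      rw [List.getElem?_append_right (by omega), List.getElem?_append_right (by omega), hEA,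
        Nat.add_sub_cancel_left])
  calc _ ≤ _ := hshift
    _ ≤ _ := hcore
    _ ≤ (Finset.univ : Finset α).card := Finset.card_filter_le _ _
    _ = Fintype.card α := Finset.card_univ
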